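/- arXiv:1208.3279 — 2 statements merged into one kernel-verified Lean document; each statement's English description precedes it below -/
import Mathlib

section
/- If the maximum score max_{y'} θ(y') exceeds a threshold t, then there exists an output y such that for every clique c, the max-marginal m(y_c) of its clique restriction exceeds t. (Safe Lattices: after thresholding max-marginals at any t below the max score, a consistent unpruned global assignment always exists.) -/
/-- Max-marginal of the clique assignment `y_c`. -/
noncomputable def maxMarginal {ι S : Type*} (θ : (ι → S) → ℝ) (c : Set ι) (y : ι → S) : ℝ :=
  ⨆ y' : {y' : ι → S // ∀ i ∈ c, y' i = y i}, θ y'.1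

/-- Safe Lattices: if the maximum score exceeds `t`, there exists an output `y`
all of whose clique max-marginals exceed `t`. -/
theorem safe_lattices {ι S : Type*} [Fintype ι] [Fintype S] [Nonempty S]
    (θ : (ι → S) → ℝ) (C : Set (Set ι)) (t : ℝ)
    (h : (⨆ y' : ι → S, θ y') > t) :
    ∃ y : ι → S, ∀ c ∈ C, maxMarginal θ c y > t := by
  have hbdd : BddAbove (Set.range θ) := (Set.finite_range θ).bddAbove
  obtain ⟨y, hy⟩ := (lt_ciSup_iff hbdd).mp h
  refine ⟨y, fun c _ => lt_of_lt_of_le hy ?_⟩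
  exact le_ciSup (f := fun y' : {y' : ι → S // ∀ i ∈ c, y' i = y i} => θ y'.1)
    (Set.finite_range _).bddAbove ⟨y, fun i _ => rfl⟩
end

section
/- For the filtering hinge objective, if the subgradient condition H(x,y;θ,α) = 0 holds (the true score beats the threshold by margin ℓ), then no clique assignment of the true output is filtered by thresholding max-marginals at τ(θ,α): m(y_c) > τ(θ,α) for all cliques c, hence the filtering loss L_f is zero. -/
/-- If the hinge `H = max(0, ℓ + τ − θ(y))` is zero (the true score beats the
threshold by margin `ℓ > 0`), then no clique assignment of the true output is
filtered: all its max-marginals exceed the threshold, and the filtering loss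
is zero. -/
theorem hinge_zero_no_filter {ι S : Type*} [Fintype ι] [Fintype S]
    (θ : (ι → S) → ℝ) (C : Set (Set ι)) (y : ι → S) (t l : ℝ) (hl : 0 < l)
    (hH : max 0 (l + t - θ y) = 0) :
    (∀ c ∈ C, maxMarginal θ c y > t) ∧ (if θ y ≤ t then (1:ℝ) else 0) = 0 := by
  have h : l + t - θ y ≤ 0 := by
    by_contra h
    push_neg at h
    have := max_eq_right (le_of_lt h) ▸ hH
    linarith
  have hθ : t < θ y := by linarith
  constructor
  · intro c _
    have hle : θ y ≤ maxMarginal θ c y := by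
      have : BddAbove (Set.range fun y' : {y' : ι → S // ∀ i ∈ c, y' i = y i} => θ y'.1) :=
        (Set.finite_range _).bddAbove
      exact le_ciSup this ⟨y, fun i _ => rfl⟩
    linarith
  · simp [not_le.mpr hθ]
end
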